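/- If (X, ρ) is a complete metric space with ρ ≤ 2, then the metric space (X̂, ρ̂) is complete: every Cauchy sequence in X̂ converges, either to a point of [0,∞) × X (when the first coordinates g(sₙ) stay bounded away from 1 along a limit) or to Δ∞ (when g(sₙ) → 1, i.e., sₙ → ∞). -/

import Mathlib

open scoped NNReal ENNReal

/-- `g(s) = s/(s+1)`, mapping `[0,∞)` into `[0,1)`. -/
noncomputable def g (s : ℝ≥0) : ℝ := (s : ℝ) / ((s : ℝ) + 1)

/-- The metric `ρ̂` on `X̂ = ([0,∞) × X) ∪ {Δ∞}`, where `Δ∞` is encoded as `none`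
and a pair `(s, x)` as `some (s, x)`. -/
noncomputable def hatDist {X : Type*} [MetricSpace X] :
    Option (ℝ≥0 × X) → Option (ℝ≥0 × X) → ℝ
  | some p, some q => dist p.2 q.2 * (1 - max (g p.1) (g q.1)) + |g p.1 - g q.1|
  | some p, none => 1 - g p.1
  | none, some q => 1 - g q.1
  | none, none => 0

lemma g_nonneg' (s : ℝ≥0) : 0 ≤ g s :=
  div_nonneg s.coe_nonneg (by linarith [s.coe_nonneg])

lemma g_lt_one' (s : ℝ≥0) : g s < 1 := by
  unfold g
  rw [div_lt_one (by linarith [s.coe_nonneg])]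
  linarith [s.coe_nonneg]

/-- If `(X, ρ)` is a complete metric space with `ρ ≤ 2`, then `(X̂, ρ̂)` is
complete: every Cauchy sequence in `X̂` converges. -/
theorem stmt_6 {X : Type*} [MetricSpace X] [CompleteSpace X]
    (hρ : ∀ x y : X, dist x y ≤ 2)
    [m : MetricSpace (Option (ℝ≥0 × X))]
    (hm : ∀ p q : Option (ℝ≥0 × X), dist p q = hatDist p q) :
    CompleteSpace (Option (ℝ≥0 × X)) := by
  refine Metric.complete_of_cauchySeq_tendsto ?_
  intro u hu
  set G : Option (ℝ≥0 × X) → ℝ := fun o => Option.elim o 1 (fun p => g p.1) with hGdef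
  have hG0 : ∀ o, 0 ≤ G o := by
    intro o; cases o with
    | none => simp [hGdef]
    | some p => exact g_nonneg' _
  have hG1 : ∀ o, G o ≤ 1 := by
    intro o; cases o with
    | none => simp [hGdef]
    | some p => exact (g_lt_one' _).le
  have hGlip : ∀ p q : Option (ℝ≥0 × X), dist (G p) (G q) ≤ dist p q := by
    intro p q
    rw [Real.dist_eq, hm]
    cases p with
    | none =>
      cases q with
      | none => simp [hatDist, hGdef]
      | some q =>
        simp only [hatDist, hGdef, Option.elim]
        rw [abs_of_nonneg (by linarith [g_lt_one' q.1])]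
    | some p =>
      cases q with
      | none =>
        simp only [hatDist, hGdef, Option.elim]
        rw [abs_of_nonpos (by linarith [g_lt_one' p.1])]
        ring_nf
        linarith
      | some q =>
        simp only [hatDist, hGdef, Option.elim]
        have h1 : 0 ≤ dist p.2 q.2 := dist_nonneg
        have h2 : max (g p.1) (g q.1) ≤ 1 :=
          max_le (g_lt_one' _).le (g_lt_one' _).le
        nlinarith
  have hGc : CauchySeq (G ∘ u) := by
    rw [Metric.cauchySeq_iff] at hu ⊢
    intro ε hε
    obtain ⟨N, hN⟩ := hu ε hε
    exact ⟨N, fun a ha b hb => lt_of_le_of_lt (hGlip _ _) (hN a ha b hb)⟩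
  obtain ⟨L, hL⟩ := cauchySeq_tendsto_of_complete hGc
  have hL1 : L ≤ 1 := le_of_tendsto hL (Filter.Eventually.of_forall fun n => hG1 _)
  have hL0 : 0 ≤ L := ge_of_tendsto hL (Filter.Eventually.of_forall fun n => hG0 _)
  by_cases hcase : L = 1
  · -- sequence converges to `none` (i.e. Δ∞)
    refine ⟨none, ?_⟩
    rw [tendsto_iff_dist_tendsto_zero]
    have heq : ∀ n, dist (u n) (none : Option (ℝ≥0 × X)) = 1 - G (u n) := by
      intro n
      rw [hm]
      cases h : u n <;> simp [hatDist, hGdef, h]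
    simp only [heq]
    have h2 : Filter.Tendsto (fun n => 1 - (G ∘ u) n) Filter.atTop (nhds (1 - L)) :=
      tendsto_const_nhds.sub hL
    rw [hcase, sub_self] at h2
    exact h2
  · have hLlt : L < 1 := lt_of_le_of_ne hL1 hcase
    set c : ℝ := (1 + L) / 2 with hcdef
    have hLc : L < c := by rw [hcdef]; linarith
    have hc1 : c < 1 := by rw [hcdef]; linarith
    obtain ⟨N, hN⟩ := Filter.eventually_atTop.mp (hL.eventually (gt_mem_nhds hLc))
    set v : ℕ → Option (ℝ≥0 × X) := fun n => u (n + N) with hvdef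
    have hvc : CauchySeq v := by
      rw [Metric.cauchySeq_iff] at hu ⊢
      intro ε hε
      obtain ⟨M, hM⟩ := hu ε hε
      exact ⟨M, fun a ha b hb =>
        hM (a + N) (le_trans ha (Nat.le_add_right _ _)) (b + N)
          (le_trans hb (Nat.le_add_right _ _))⟩
    have hvs : ∀ n, ∃ p : ℝ≥0 × X, v n = some p := by
      intro n
      cases h : v n with
      | none =>
        exfalso
        have h1 := hN (n + N) (Nat.le_add_left _ _)
        have h2 : u (n + N) = none := h
        simp only [Function.comp_apply, hGdef, h2, Option.elim] at h1
        linarith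
      | some p => exact ⟨p, rfl⟩
    choose q hq using hvs
    have hgq : ∀ n, g (q n).1 = G (v n) := by
      intro n; rw [hq n]; rfl
    have hgqc : ∀ n, g (q n).1 < c := by
      intro n
      rw [hgq]
      exact hN (n + N) (Nat.le_add_left _ _)
    have hc0 : (0:ℝ) < 1 - c := by linarith
    have hqcauchy : CauchySeq (fun n => (q n).2) := by
      rw [Metric.cauchySeq_iff] at hvc ⊢
      intro ε hε
      obtain ⟨M, hM⟩ := hvc (ε * (1 - c)) (mul_pos hε hc0)
      refine ⟨M, fun a ha b hb => ?_⟩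
      have h1 := hM a ha b hb
      rw [hm, hq a, hq b] at h1
      simp only [hatDist] at h1
      have hmax : max (g (q a).1) (g (q b).1) < c := max_lt (hgqc a) (hgqc b)
      have habs : 0 ≤ |g (q a).1 - g (q b).1| := abs_nonneg _
      have hd : 0 ≤ dist (q a).2 (q b).2 := dist_nonneg
      have h3 : dist (q a).2 (q b).2 * (1 - c) ≤
          dist (q a).2 (q b).2 * (1 - max (g (q a).1) (g (q b).1)) :=
        mul_le_mul_of_nonneg_left (by linarith) hd
      have h4 : dist (q a).2 (q b).2 * (1 - c) < ε * (1 - c) := by linarith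
      exact lt_of_mul_lt_mul_right h4 hc0.le
    obtain ⟨x, hx⟩ := cauchySeq_tendsto_of_complete hqcauchy
    have hgL : Filter.Tendsto (fun n => g (q n).1) Filter.atTop (nhds L) := by
      have h1 : Filter.Tendsto (fun n : ℕ => (G ∘ u) (n + N)) Filter.atTop (nhds L) :=
        hL.comp (Filter.tendsto_add_atTop_nat N)
      exact h1.congr fun n => (hgq n).symm
    set s₀ : ℝ≥0 := Real.toNNReal (L / (1 - L)) with hs₀def
    have hgs₀ : g s₀ = L := by
      have h1 : (0:ℝ) ≤ L / (1 - L) := div_nonneg hL0 (by linarith)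
      rw [hs₀def]
      unfold g
      rw [Real.coe_toNNReal _ h1]
      have hne : (1:ℝ) - L ≠ 0 := by linarith
      field_simp
      ring
    refine ⟨some (s₀, x), ?_⟩
    rw [← Filter.tendsto_add_atTop_iff_nat N]
    rw [tendsto_iff_dist_tendsto_zero]
    have hbound : ∀ n, dist (u (n + N)) (some (s₀, x)) ≤
        dist (q n).2 x + |g (q n).1 - L| := by
      intro n
      rw [hm]
      have hv : u (n + N) = some (q n) := hq n
      rw [hv]
      simp only [hatDist]
      rw [hgs₀]
      have h1 : dist (q n).2 x * (1 - max (g (q n).1) (g s₀)) ≤ dist (q n).2 x := by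
        apply mul_le_of_le_one_right dist_nonneg
        have h2 : 0 ≤ max (g (q n).1) (g s₀) :=
          le_trans (g_nonneg' (q n).1) (le_max_left _ _)
        linarith
      rw [hgs₀] at h1
      linarith
    have htend : Filter.Tendsto (fun n => dist (q n).2 x + |g (q n).1 - L|)
        Filter.atTop (nhds 0) := by
      have h1 : Filter.Tendsto (fun n => dist (q n).2 x) Filter.atTop (nhds 0) :=
        tendsto_iff_dist_tendsto_zero.mp hx
      have h2 : Filter.Tendsto (fun n => |g (q n).1 - L|) Filter.atTop (nhds 0) := by
        have h3 := (hgL.sub (tendsto_const_nhds (x := L))).abs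
        simpa using h3
      simpa using h1.add h2
    exact squeeze_zero (fun n => dist_nonneg) hbound htend
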